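/- Let G be a finite abelian group and R ⊆ G with R = R⁻¹ and 1 ∉ R. If the Cayley graph Cay(G,R) has perfect state transfer from g to h at a time t that is an odd integer multiple of π/2, then the semi-Cayley graph SC(G,R,R,{1}) has perfect state transfer from (g,0) to (h,1) at time t. -/

import Mathlib

open scoped Classical Pointwise
open Complex Finset Matrix

noncomputable section

/-- Adjacency matrix of the semi-Cayley graph `SC(G,R,L,S)` on vertex set `G × Fin 2`. -/
def scAdj {G : Type*} [Group G] (R L S : Finset G) :
    Matrix (G × Fin 2) (G × Fin 2) ℂ := fun u v =>
  if u.2 = 0 ∧ v.2 = 0 ∧ v.1 * u.1⁻¹ ∈ R then 1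
  else if u.2 = 1 ∧ v.2 = 1 ∧ v.1 * u.1⁻¹ ∈ L then 1
  else if u.2 = 0 ∧ v.2 = 1 ∧ v.1 * u.1⁻¹ ∈ S then 1
  else if u.2 = 1 ∧ v.2 = 0 ∧ u.1 * v.1⁻¹ ∈ S then 1
  else 0

/-- Adjacency matrix of the Cayley graph `Cay(G,T)`. -/
def cayAdj {G : Type*} [Group G] (T : Finset G) : Matrix G G ℂ := fun u v =>
  if v * u⁻¹ ∈ T then 1 else 0

/-- Transfer matrix `H(t) = exp(-i t A)`. -/
def transfer {V : Type*} [Fintype V] [DecidableEq V]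
    (A : Matrix V V ℂ) (t : ℝ) : Matrix V V ℂ :=
  NormedSpace.exp ((-(Complex.I * (t : ℂ))) • A)

/-- Perfect state transfer from `u` to `v` at time `t`. -/
def pst {V : Type*} [Fintype V] [DecidableEq V]
    (A : Matrix V V ℂ) (u v : V) (t : ℝ) : Prop :=
  ‖transfer A t u v‖ = 1

/-- A matrix is integral if all its eigenvalues are integers. -/
def isIntegral {V : Type*} [Fintype V] [DecidableEq V] (A : Matrix V V ℂ) : Prop :=
  ∀ μ ∈ spectrum ℂ A, ∃ k : ℤ, μ = (k : ℂ)

/-- The character sum `χ(X) = ∑_{x ∈ X} χ(x)`. -/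
def charSum {G : Type*} [Group G] (χ : G →* ℂ) (X : Finset G) : ℂ := ∑ x ∈ X, χ x

/-- The eigenvalue `λ_χ⁺` of `SC(G,R,L,S)`, with the convention `λ_χ⁺ = χ(R)` when `χ(S) = 0`. -/
def lamP {G : Type*} [Group G] (R L S : Finset G) (χ : G →* ℂ) : ℝ :=
  if charSum χ S = 0 then (charSum χ R).re
  else ((charSum χ R).re + (charSum χ L).re +
    Real.sqrt (((charSum χ R).re - (charSum χ L).re) ^ 2 +
      4 * ‖charSum χ S‖ ^ 2)) / 2

/-- The eigenvalue `λ_χ⁻` of `SC(G,R,L,S)`, with the convention `λ_χ⁻ = χ(L)` when `χ(S) = 0`. -/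
def lamM {G : Type*} [Group G] (R L S : Finset G) (χ : G →* ℂ) : ℝ :=
  if charSum χ S = 0 then (charSum χ L).re
  else ((charSum χ R).re + (charSum χ L).re -
    Real.sqrt (((charSum χ R).re - (charSum χ L).re) ^ 2 +
      4 * ‖charSum χ S‖ ^ 2)) / 2

/-- The 2-adic valuation `ν₂` with `ν₂(0) = ∞`, extended (junk value `0`) to the reals. -/
def nu2 (x : ℝ) : WithTop ℤ :=
  if x = 0 then ⊤
  else if hq : ∃ q : ℚ, (q : ℝ) = x then ((padicValRat 2 hq.choose : ℤ) : WithTop ℤ)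
  else 0

/-! ### Auxiliary material for Statement 4 -/

open Kronecker in
/-- The (unnormalized) Hadamard matrix on `Fin 2`. -/
def Umat : Matrix (Fin 2) (Fin 2) ℂ := !![1,1;1,-1]

open Kronecker in
/-- The conjugating matrix `1 ⊗ₖ Umat` on `G × Fin 2`. -/
def Wmat (G : Type*) [Fintype G] [DecidableEq G] : Matrix (G × Fin 2) (G × Fin 2) ℂ :=
  (1 : Matrix G G ℂ) ⊗ₖ Umat

lemma Umat_mul_Umat : Umat * Umat = (2 : ℂ) • 1 := by
  ext i j
  fin_cases i <;> fin_cases j <;>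
    simp [Umat, Matrix.mul_apply, Fin.sum_univ_two, Matrix.one_apply] <;> norm_num

open Kronecker in
lemma Wmat_mul_Wmat (G : Type*) [Fintype G] [DecidableEq G] :
    Wmat G * Wmat G = (2 : ℂ) • 1 := by
  rw [Wmat, ← Matrix.mul_kronecker_mul, Umat_mul_Umat, Matrix.kronecker_smul, one_mul,
    Matrix.one_kronecker_one]

lemma Wmat_mul_inv (G : Type*) [Fintype G] [DecidableEq G] :
    Wmat G * ((2:ℂ)⁻¹ • Wmat G) = 1 := by
  rw [Matrix.mul_smul, Wmat_mul_Wmat, smul_smul]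
  norm_num

lemma inv_mul_Wmat (G : Type*) [Fintype G] [DecidableEq G] :
    ((2:ℂ)⁻¹ • Wmat G) * Wmat G = 1 := by
  rw [Matrix.smul_mul, Wmat_mul_Wmat, smul_smul]
  norm_num

lemma conj_entry {G : Type*} [Fintype G] [DecidableEq G]
    (T : Fin 2 → Matrix G G ℂ) (x y : G) (a b : Fin 2) :
    (Wmat G * Matrix.blockDiagonal T * ((2:ℂ)⁻¹ • Wmat G)) (x, a) (y, b)
      = (2:ℂ)⁻¹ * ∑ j, Umat a j * T j x y * Umat j b := by
  simp [Wmat, Matrix.mul_apply, Fintype.sum_prod_type, Matrix.blockDiagonal_apply,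
    Matrix.one_apply, Finset.mul_sum, Finset.sum_mul, mul_comm, mul_assoc, mul_left_comm, mul_add]

lemma exp_smul_one {m : Type*} [Fintype m] [DecidableEq m] (z : ℂ) :
    NormedSpace.exp (z • (1 : Matrix m m ℂ)) = Complex.exp z • 1 := by
  rw [Matrix.smul_one_eq_diagonal, Matrix.exp_diagonal, Pi.exp_def,
    Matrix.smul_one_eq_diagonal, ← Complex.exp_eq_exp_ℂ]

lemma scAdj_decomp {G : Type*} [CommGroup G] [Fintype G] [DecidableEq G] (R : Finset G) :
    scAdj R R ({1} : Finset G) =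
      Wmat G * Matrix.blockDiagonal (fun j : Fin 2 => cayAdj R + (![1,-1] j : ℂ) • 1) *
        ((2:ℂ)⁻¹ • Wmat G) := by
  ext ⟨x, a⟩ ⟨y, b⟩
  rw [conj_entry]
  fin_cases a <;> fin_cases b <;>
    simp [scAdj, cayAdj, Umat, Fin.sum_univ_two, Matrix.one_apply, Matrix.add_apply,
      Matrix.smul_apply, mul_inv_eq_one, eq_comm] <;>
    split_ifs <;> ring

lemma transfer_entry {G : Type*} [CommGroup G] [Fintype G] [DecidableEq G]
    (R : Finset G) (g h : G) (t : ℝ) :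
    transfer (scAdj R R ({1} : Finset G)) t (g, 0) (h, 1)
      = (2:ℂ)⁻¹ * (Complex.exp (-(I * t)) - Complex.exp (I * t)) * transfer (cayAdj R) t g h := by
  set z : ℂ := -(I * t) with hz
  set A := cayAdj R with hA
  have hWinv : (Wmat G)⁻¹ = (2:ℂ)⁻¹ • Wmat G := Matrix.inv_eq_right_inv (Wmat_mul_inv G)
  have hWu : IsUnit (Wmat G) :=
    (Units.mk (Wmat G) ((2:ℂ)⁻¹ • Wmat G) (Wmat_mul_inv G) (inv_mul_Wmat G)).isUnit
  have hsc : z • scAdj R R ({1} : Finset G) =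
      Wmat G * (z • Matrix.blockDiagonal (fun j : Fin 2 => A + (![1,-1] j : ℂ) • 1)) *
        (Wmat G)⁻¹ := by
    rw [scAdj_decomp, hWinv]
    simp only [Matrix.mul_smul, Matrix.smul_mul, smul_smul, Matrix.mul_assoc]
    rw [mul_comm]
  have hexpD : NormedSpace.exp
      (z • Matrix.blockDiagonal (fun j : Fin 2 => A + (![1,-1] j : ℂ) • 1)) =
      Matrix.blockDiagonal (fun j : Fin 2 => Complex.exp (z * ![1,-1] j) • transfer A t) := by
    letI : SeminormedRing (Matrix G G ℂ) := Matrix.linftyOpSemiNormedRing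
    letI : NormedRing (Matrix G G ℂ) := Matrix.linftyOpNormedRing
    letI : NormedAlgebra ℂ (Matrix G G ℂ) := Matrix.linftyOpNormedAlgebra
    letI : NormedAlgebra ℚ (Matrix G G ℂ) := Matrix.linftyOpNormedAlgebra
    have hone : ∀ j : Fin 2, NormedSpace.exp (z • (A + (![1,-1] j : ℂ) • 1))
        = Complex.exp (z * ![1,-1] j) • transfer A t := by
      intro j
      have hcomm : Commute (z • A) ((z * ![1,-1] j) • (1 : Matrix G G ℂ)) :=
        (Commute.one_right (z • A)).smul_right _
      rw [smul_add, smul_smul, Matrix.exp_add_of_commute _ _ hcomm, exp_smul_one,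
        Matrix.mul_smul, mul_one]
      rfl
    rw [← Matrix.blockDiagonal_smul, Matrix.exp_blockDiagonal]
    exact congrArg _ (funext fun j =>
      (NormedSpace.map_exp (Pi.evalRingHom (fun _ : Fin 2 => Matrix G G ℂ) j) (continuous_apply j) _).trans
        (hone j))
  have hT : transfer (scAdj R R ({1} : Finset G)) t =
      Wmat G * Matrix.blockDiagonal (fun j : Fin 2 => Complex.exp (z * ![1,-1] j) • transfer A t)
        * ((2:ℂ)⁻¹ • Wmat G) := by
    rw [transfer, ← hz, hsc, Matrix.exp_conj _ _ hWu, hexpD, hWinv]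
  rw [hT, conj_entry]
  simp [Umat, Fin.sum_univ_two, Matrix.smul_apply]
  rw [hz, neg_neg]
  ring

/-- If `Cay(G,R)` has PST from `g` to `h` at a time `t` which is an odd
multiple of `π/2`, then `SC(G,R,R,{1})` has PST from `(g,0)` to `(h,1)` at time `t`. -/
theorem semiCayley_spoke_pst_of_cayley_pst
    {G : Type*} [CommGroup G] [Fintype G] [DecidableEq G]
    (R : Finset G) (hR : R⁻¹ = R) (h1R : (1 : G) ∉ R)
    (g h : G) (t : ℝ) (ht : 0 < t) (k : ℤ) (hk : t = (2 * (k : ℝ) + 1) * (Real.pi / 2))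
    (hpst : pst (cayAdj R) g h t) :
    pst (scAdj R R ({1} : Finset G)) (g, 0) (h, 1) t := by
  unfold pst at hpst ⊢
  rw [transfer_entry R g h t, norm_mul, hpst, mul_one]
  have h1 : Complex.exp (-(I * t)) - Complex.exp (I * t) = -(2 * Real.sin t) * I := by
    rw [show -(I * (t : ℂ)) = ((-t : ℝ) : ℂ) * I by push_cast; ring,
      show I * (t : ℂ) = ((t : ℝ) : ℂ) * I by ring, Complex.exp_mul_I, Complex.exp_mul_I,
      ← Complex.ofReal_cos, ← Complex.ofReal_sin, ← Complex.ofReal_cos, ← Complex.ofReal_sin,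
      Real.cos_neg, Real.sin_neg]
    push_cast
    ring
  rw [h1]
  have h2 : |Real.sin t| = 1 := by
    have ht' : t = (k : ℝ) * Real.pi + Real.pi / 2 := by rw [hk]; ring
    rw [ht', Real.sin_add_pi_div_two, Real.abs_cos_int_mul_pi]
  rw [norm_mul, norm_mul, norm_neg, Complex.norm_I, mul_one]
  rw [show ((2 : ℂ) * Real.sin t) = ((2 * Real.sin t : ℝ) : ℂ) by push_cast; ring,
    Complex.norm_real, Real.norm_eq_abs, abs_mul]
  rw [h2, mul_one, norm_inv]
  norm_num

end
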